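/- Let (Ω,Σ) be a measurable space, and let 𝔭, 𝔮 be probability measures on Ω with 𝔭 ≪ 𝔮 and H := H(𝔭|𝔮) < ∞. Let h : Ω → (0,∞) be measurable and let p, q > 0 be real exponents such that ∫ h^q d𝔮 < ∞ and ∫ h^{−p} d𝔮 < ∞, and assume 0 < 𝔮({h ≥ 1}) < 1. Then log h ∈ L¹(𝔭), and ∫ |log h| d𝔭 ≤ 2·e^{H−1} · max( 1/min(1,p,q), log₂( 𝔮({h ≥ 1})^{1−1/q}·‖h‖_{L^q(𝔮)} + 𝔮({h < 1})^{1−1/p}·‖h^{−1}‖_{L^p(𝔮)} ) ). -/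

import Mathlib

open MeasureTheory Real


lemma young_mul_log {r y : ℝ} (hr : 0 ≤ r) : r * y ≤ r * Real.log r - r + Real.exp y := by
  rcases eq_or_lt_of_le hr with h0 | h0
  · simp [← h0]
    positivity
  · have h1 : y - Real.log r + 1 ≤ Real.exp (y - Real.log r) := Real.add_one_le_exp _
    have h2 : r * (y - Real.log r + 1) ≤ r * Real.exp (y - Real.log r) :=
      mul_le_mul_of_nonneg_left h1 hr
    have h3 : r * Real.exp (y - Real.log r) = Real.exp y := by
      rw [Real.exp_sub, Real.exp_log h0]
      field_simp
    nlinarith [h3]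

lemma nonneg_sub_one_le_mul_log {r : ℝ} (hr : 0 ≤ r) : r - 1 ≤ r * Real.log r := by
  have := young_mul_log (y := 0) hr
  simp at this
  linarith


lemma aux_holder {Ω : Type*} [MeasurableSpace Ω] (μ : Measure Ω) [IsFiniteMeasure μ]
    {s : Set Ω} (hs : MeasurableSet s) {g : Ω → ℝ} (hgm : Measurable g)
    (hg1 : ∀ x ∈ s, 1 ≤ g x) (hgint : IntegrableOn g s μ)
    {θ : ℝ} (hθ0 : 0 < θ) (hθ1 : θ ≤ 1) (ha : 0 < (μ s).toReal) :
    ∫ x in s, g x ^ θ ∂μ ≤ (μ s).toReal ^ (1 - θ) * (∫ x in s, g x ∂μ) ^ θ := by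
  set a : ℝ := (μ s).toReal with ha_def
  set Qs : ℝ := ∫ x in s, g x ∂μ with hQs_def
  have hconst : IntegrableOn (fun _ : Ω => (1:ℝ)) s μ :=
    integrableOn_const (measure_lt_top μ s).ne
  have hQa : a ≤ Qs := by
    have h1 : ∫ x in s, (1:ℝ) ∂μ = a := by simp [ha_def, Measure.real]
    rw [← h1]
    exact setIntegral_mono_on hconst hgint hs hg1
  have hQ0 : 0 < Qs := lt_of_lt_of_le ha hQa
  set lam : ℝ := a / Qs with hlam_def
  have hlam0 : 0 < lam := div_pos ha hQ0
  -- pointwise bound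
  have hpt : ∀ x ∈ s, g x ^ θ ≤ (lam ^ (-θ) * θ * lam) * g x + lam ^ (-θ) * (1 - θ) := by
    intro x hx
    have hgx : 0 ≤ g x := le_trans zero_le_one (hg1 x hx)
    have h1 : (lam * g x) ^ θ * (1:ℝ) ^ (1 - θ) ≤ θ * (lam * g x) + (1 - θ) * 1 :=
      Real.geom_mean_le_arith_mean2_weighted hθ0.le (by linarith)
        (mul_nonneg hlam0.le hgx) zero_le_one (by ring)
    have h2 : (lam * g x) ^ θ = lam ^ θ * g x ^ θ :=
      Real.mul_rpow hlam0.le hgx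
    have h3 : lam ^ (-θ) * lam ^ θ = 1 := by
      rw [← Real.rpow_add hlam0]; simp
    have h4 : g x ^ θ = lam ^ (-θ) * (lam * g x) ^ θ := by
      rw [h2, ← mul_assoc, h3, one_mul]
    rw [h4]
    have h5 : lam ^ (-θ) * (lam * g x) ^ θ ≤ lam ^ (-θ) * (θ * (lam * g x) + (1 - θ) * 1) := by
      apply mul_le_mul_of_nonneg_left _ (Real.rpow_nonneg hlam0.le _)
      simpa using h1
    calc lam ^ (-θ) * (lam * g x) ^ θ ≤ lam ^ (-θ) * (θ * (lam * g x) + (1 - θ) * 1) := h5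
      _ = (lam ^ (-θ) * θ * lam) * g x + lam ^ (-θ) * (1 - θ) := by ring
  -- integrate
  have hmeasθ : Measurable fun x => g x ^ θ := (Real.continuous_rpow_const hθ0.le).measurable.comp hgm
  have hint_rhs : IntegrableOn (fun x => (lam ^ (-θ) * θ * lam) * g x + lam ^ (-θ) * (1 - θ)) s μ :=
    (hgint.const_mul _).add (integrableOn_const (measure_lt_top μ s).ne)
  have hint_lhs : IntegrableOn (fun x => g x ^ θ) s μ := by
    apply hgint.mono' hmeasθ.aestronglyMeasurable.restrict
    rw [ae_restrict_iff' hs]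
    filter_upwards with x hx
    have hgx1 : 1 ≤ g x := hg1 x hx
    have : g x ^ θ ≤ g x ^ (1:ℝ) := Real.rpow_le_rpow_of_exponent_le hgx1 hθ1
    rw [Real.rpow_one] at this
    rw [Real.norm_eq_abs, abs_of_nonneg (Real.rpow_nonneg (by linarith) _)]
    exact this
  have hIle : ∫ x in s, g x ^ θ ∂μ ≤
      ∫ x in s, ((lam ^ (-θ) * θ * lam) * g x + lam ^ (-θ) * (1 - θ)) ∂μ :=
    setIntegral_mono_on hint_lhs hint_rhs hs hpt
  have hIrhs : ∫ x in s, ((lam ^ (-θ) * θ * lam) * g x + lam ^ (-θ) * (1 - θ)) ∂μ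
      = (lam ^ (-θ) * θ * lam) * Qs + lam ^ (-θ) * (1 - θ) * a := by
    rw [integral_add (hgint.const_mul _) (integrableOn_const (measure_lt_top μ s).ne),
      integral_const_mul]
    simp only [integral_const, smul_eq_mul, Measure.real, Measure.restrict_apply_univ, ← ha_def]
    ring
  -- algebra: value equals a^(1-θ) * Qs^θ
  have hkey : lam ^ (-θ) * a = a ^ (1 - θ) * Qs ^ θ := by
    have h2 : lam ^ θ = a ^ θ / Qs ^ θ := Real.div_rpow ha.le hQ0.le θ
    have h3 : a ^ (1 - θ) = a / a ^ θ := by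
      rw [Real.rpow_sub ha, Real.rpow_one]
    have haθ : (0:ℝ) < a ^ θ := Real.rpow_pos_of_pos ha _
    have hQθ : (0:ℝ) < Qs ^ θ := Real.rpow_pos_of_pos hQ0 _
    rw [Real.rpow_neg hlam0.le, h2, h3]
    field_simp
  have hlamQ : lam * Qs = a := div_mul_cancel₀ a hQ0.ne'
  have hfin : (lam ^ (-θ) * θ * lam) * Qs + lam ^ (-θ) * (1 - θ) * a = a ^ (1 - θ) * Qs ^ θ := by
    have : (lam ^ (-θ) * θ * lam) * Qs = θ * (lam ^ (-θ) * a) := by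
      rw [mul_assoc (lam ^ (-θ) * θ), hlamQ]; ring
    have h6 : lam ^ (-θ) * (1 - θ) * a = (1 - θ) * (lam ^ (-θ) * a) := by ring
    rw [this, h6, hkey]
    ring
  calc ∫ x in s, g x ^ θ ∂μ ≤ _ := hIle
    _ = _ := hIrhs
    _ = a ^ (1 - θ) * Qs ^ θ := hfin

/-- Lemma on log-integrability, eq. (bound:L1).
If `𝔭 ≪ 𝔮` are probability measures with finite relative entropy
`H = ∫ log (d𝔭/d𝔮) d𝔭`, `h` is a positive measurable function with
`h ∈ L^q(𝔮)` and `h⁻¹ ∈ L^p(𝔮)` for some `p, q > 0`, and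
`0 < 𝔮({h ≥ 1}) < 1`, then `log h ∈ L¹(𝔭)` with the explicit bound. -/
theorem log_integrability_bound
    {Ω : Type*} [MeasurableSpace Ω]
    (𝔭 𝔮 : Measure Ω) [IsProbabilityMeasure 𝔭] [IsProbabilityMeasure 𝔮]
    (hac : 𝔭 ≪ 𝔮)
    (hH : Integrable (fun x => Real.log ((𝔭.rnDeriv 𝔮 x).toReal)) 𝔭)
    (h : Ω → ℝ) (hmeas : Measurable h) (hpos : ∀ x, 0 < h x)
    (p q : ℝ) (hp : 0 < p) (hq : 0 < q)
    (hhq : Integrable (fun x => h x ^ q) 𝔮)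
    (hhp : Integrable (fun x => h x ^ (-p)) 𝔮)
    (hP0 : 0 < 𝔮 {x | 1 ≤ h x}) (hP1 : 𝔮 {x | 1 ≤ h x} < 1) :
    Integrable (fun x => Real.log (h x)) 𝔭 ∧
    ∫ x, |Real.log (h x)| ∂𝔭 ≤
      2 * Real.exp ((∫ x, Real.log ((𝔭.rnDeriv 𝔮 x).toReal) ∂𝔭) - 1) *
        max (1 / min 1 (min p q))
          (Real.logb 2
            ((𝔮 {x | 1 ≤ h x}).toReal ^ (1 - 1 / q) * (∫ x, h x ^ q ∂𝔮) ^ (1 / q)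
              + (𝔮 {x | h x < 1}).toReal ^ (1 - 1 / p) * (∫ x, h x ^ (-p) ∂𝔮) ^ (1 / p))) := by
  -- notation
  set ρ : Ω → ℝ := fun x => (𝔭.rnDeriv 𝔮 x).toReal with hρ_def
  have hρmeas : Measurable ρ := (Measure.measurable_rnDeriv _ _).ennreal_toReal
  have hρnn : ∀ x, 0 ≤ ρ x := fun x => ENNReal.toReal_nonneg
  have hρint : Integrable ρ 𝔮 := Measure.integrable_toReal_rnDeriv
  have hρ1 : ∫ x, ρ x ∂𝔮 = 1 := by
    rw [hρ_def, Measure.integral_toReal_rnDeriv hac]; simp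
  set H : ℝ := ∫ x, Real.log (ρ x) ∂𝔭 with hH_def
  have hρlog : Integrable (fun x => ρ x * Real.log (ρ x)) 𝔮 := by
    have := (integrable_rnDeriv_smul_iff (f := fun x => Real.log (ρ x)) hac).mpr hH
    simpa [smul_eq_mul] using this
  have hρlogint : ∫ x, ρ x * Real.log (ρ x) ∂𝔮 = H := by
    have := integral_rnDeriv_smul (f := fun x => Real.log (ρ x)) hac
    simpa [smul_eq_mul] using this
  set m : ℝ := min 1 (min p q) with hm_def
  have hm0 : 0 < m := lt_min one_pos (lt_min hp hq)
  have hm1 : m ≤ 1 := min_le_left _ _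
  have hmp : m ≤ p := le_trans (min_le_right _ _) (min_le_left _ _)
  have hmq : m ≤ q := le_trans (min_le_right _ _) (min_le_right _ _)
  set u : Ω → ℝ := fun x => |Real.log (h x)| with hu_def
  have humeas : Measurable u := (Real.measurable_log.comp hmeas).abs
  have hunn : ∀ x, 0 ≤ u x := fun x => abs_nonneg _
  set E : Ω → ℝ := fun x => Real.exp (m * u x) with hE_def
  have hEmeas : Measurable E := (humeas.const_mul m).exp
  have hE_eq : ∀ x, E x = if 1 ≤ h x then h x ^ m else h x ^ (-m) := by
    intro x
    by_cases hx : 1 ≤ h x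
    · rw [if_pos hx]
      have hlog : 0 ≤ Real.log (h x) := Real.log_nonneg hx
      rw [hE_def]
      simp only
      rw [hu_def]
      simp only [abs_of_nonneg hlog]
      rw [Real.rpow_def_of_pos (hpos x), mul_comm]
    · rw [if_neg hx]
      push_neg at hx
      have hlog : Real.log (h x) ≤ 0 := Real.log_nonpos (hpos x).le hx.le
      rw [hE_def]
      simp only
      rw [hu_def]
      simp only [abs_of_nonpos hlog]
      rw [Real.rpow_def_of_pos (hpos x)]
      ring_nf
  have hEb : ∀ x, E x ≤ h x ^ q + h x ^ (-p) := by
    intro x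
    rw [hE_eq x]
    by_cases hx : 1 ≤ h x
    · rw [if_pos hx]
      have h1 : h x ^ m ≤ h x ^ q := Real.rpow_le_rpow_of_exponent_le hx hmq
      have h2 : 0 ≤ h x ^ (-p) := Real.rpow_nonneg (hpos x).le _
      linarith
    · rw [if_neg hx]
      push_neg at hx
      have h1 : h x ^ (-m) ≤ h x ^ (-p) :=
        Real.rpow_le_rpow_of_exponent_ge (hpos x) hx.le (neg_le_neg hmp)
      have h2 : 0 ≤ h x ^ q := Real.rpow_nonneg (hpos x).le _
      linarith
  have hEint : Integrable E 𝔮 := by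
    apply (hhq.add hhp).mono' hEmeas.aestronglyMeasurable
    filter_upwards with x
    rw [Real.norm_eq_abs, abs_of_nonneg (Real.exp_nonneg _)]
    exact hEb x
  set Z : ℝ := ∫ x, E x ∂𝔮 with hZ_def
  have hZ1 : (1:ℝ) ≤ Z := by
    have : ∫ _x, (1:ℝ) ∂𝔮 = 1 := by simp
    rw [← this]
    apply integral_mono (integrable_const 1) hEint
    intro x
    rw [← Real.exp_zero]
    exact Real.exp_le_exp.mpr (mul_nonneg hm0.le (hunn x))
  have hZ0 : (0:ℝ) < Z := lt_of_lt_of_le one_pos hZ1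
  -- Young / variational inequality pointwise
  have hyoung : ∀ x, ρ x * (m * u x) ≤
      ρ x * Real.log (ρ x) + ρ x * Real.log Z - ρ x + E x / Z := by
    intro x
    have := young_mul_log (r := ρ x) (y := m * u x - Real.log Z) (hρnn x)
    have hexp : Real.exp (m * u x - Real.log Z) = E x / Z := by
      rw [Real.exp_sub, Real.exp_log hZ0, hE_def]
    rw [hexp] at this
    nlinarith [this]
  set G : Ω → ℝ := fun x =>
    ρ x * Real.log (ρ x) + ρ x * Real.log Z - ρ x + E x / Z with hG_def
  have hGint : Integrable G 𝔮 :=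
    ((hρlog.add (hρint.mul_const _)).sub hρint).add (hEint.div_const Z)
  have hρu_int : Integrable (fun x => ρ x * u x) 𝔮 := by
    apply (hGint.const_mul m⁻¹).mono' (hρmeas.mul humeas).aestronglyMeasurable
    filter_upwards with x
    rw [Real.norm_eq_abs, Pi.mul_apply, abs_of_nonneg (mul_nonneg (hρnn x) (hunn x))]
    have h1 := hyoung x
    have h2 : ρ x * u x ≤ m⁻¹ * G x := by
      rw [hG_def]
      have h3 : m * (ρ x * u x) ≤ G x := by rw [hG_def]; nlinarith [h1]
      calc ρ x * u x = m⁻¹ * (m * (ρ x * u x)) := by field_simp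
        _ ≤ m⁻¹ * G x := by
            apply mul_le_mul_of_nonneg_left h3 (by positivity)
    exact h2
  have hu_int : Integrable u 𝔭 := by
    have := (integrable_rnDeriv_smul_iff (f := u) hac).mp ?_
    · exact this
    · simpa [smul_eq_mul] using hρu_int
  have hlog_int : Integrable (fun x => Real.log (h x)) 𝔭 := by
    apply hu_int.mono' (Real.measurable_log.comp hmeas).aestronglyMeasurable
    filter_upwards with x
    rw [Real.norm_eq_abs]
    exact le_rfl
  refine ⟨hlog_int, ?_⟩
  -- main bound
  set I : ℝ := ∫ x, u x ∂𝔭 with hI_def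
  have hI_eq : ∫ x, ρ x * u x ∂𝔮 = I := by
    have := integral_rnDeriv_smul (f := u) hac
    simpa [smul_eq_mul] using this
  have hI0 : 0 ≤ I := integral_nonneg fun x => hunn x
  have hkey : m * I ≤ H + Real.log Z := by
    have h1 : ∫ x, m * (ρ x * u x) ∂𝔮 ≤ ∫ x, G x ∂𝔮 := by
      apply integral_mono (hρu_int.const_mul m) hGint
      intro x
      have := hyoung x
      rw [hG_def]
      nlinarith [this]
    have h2 : ∫ x, m * (ρ x * u x) ∂𝔮 = m * I := by
      rw [integral_const_mul, hI_eq]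
    have h3 : ∫ x, G x ∂𝔮 = H + Real.log Z := by
      have ia : Integrable (fun x => ρ x * Real.log (ρ x) + ρ x * Real.log Z) 𝔮 :=
        hρlog.add (hρint.mul_const _)
      have ib : Integrable (fun x => ρ x * Real.log (ρ x) + ρ x * Real.log Z - ρ x) 𝔮 :=
        ia.sub hρint
      have ic : Integrable (fun x => E x / Z) 𝔮 := hEint.div_const Z
      rw [hG_def]
      rw [integral_add ib ic, integral_sub ia hρint, integral_add hρlog (hρint.mul_const _)]
      rw [integral_mul_const, hρlogint, hρ1, integral_div, ← hZ_def,
        div_self hZ0.ne']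
      ring
    rw [← h2, ← h3]
    exact h1
  
  -- sets and masses
  set s : Set Ω := {x | 1 ≤ h x} with hs_def
  have hs : MeasurableSet s := measurableSet_le measurable_const hmeas
  have hsc_eq : {x | h x < 1} = sᶜ := by
    ext x; simp [hs_def, not_le]
  rw [hsc_eq]
  set a : ℝ := (𝔮 s).toReal with ha_def
  set b : ℝ := (𝔮 sᶜ).toReal with hb_def
  have ha0 : 0 < a := ENNReal.toReal_pos hP0.ne' (measure_ne_top _ _)
  have hab : a + b = 1 := by
    rw [ha_def, hb_def, ← ENNReal.toReal_add (measure_ne_top _ _) (measure_ne_top _ _),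
      measure_add_measure_compl hs]
    simp
  have ha1 : a < 1 := by
    rw [ha_def]
    have := (ENNReal.toReal_lt_toReal (measure_ne_top 𝔮 s) ENNReal.one_ne_top).mpr hP1
    simpa using this
  have hb0 : 0 < b := by linarith
  set Q : ℝ := ∫ x, h x ^ q ∂𝔮 with hQ_def
  set P : ℝ := ∫ x, h x ^ (-p) ∂𝔮 with hP_def
  have hq_on : ∀ x ∈ s, 1 ≤ h x ^ q := fun x hx => Real.one_le_rpow hx hq.le
  have hp_on : ∀ x ∈ sᶜ, 1 ≤ h x ^ (-p) := by
    intro x hx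
    simp only [hs_def, Set.mem_compl_iff, Set.mem_setOf_eq, not_le] at hx
    rw [Real.rpow_neg (hpos x).le]
    have hpp : 0 < h x ^ p := Real.rpow_pos_of_pos (hpos x) p
    have h1 : h x ^ p ≤ 1 := Real.rpow_le_one (hpos x).le hx.le hp.le
    exact one_le_inv_iff₀.mpr ⟨hpp, h1⟩
  have hQs_ge : a ≤ ∫ x in s, h x ^ q ∂𝔮 := by
    have h1 : ∫ _x in s, (1:ℝ) ∂𝔮 = a := by simp [ha_def, Measure.real]
    rw [← h1]
    exact setIntegral_mono_on (integrableOn_const (measure_lt_top _ _).ne)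
      hhq.integrableOn hs hq_on
  have hQsQ : ∫ x in s, h x ^ q ∂𝔮 ≤ Q :=
    setIntegral_le_integral hhq (Filter.Eventually.of_forall fun x => Real.rpow_nonneg (hpos x).le _)
  have hQa : a ≤ Q := le_trans hQs_ge hQsQ
  have hQ0 : 0 < Q := lt_of_lt_of_le ha0 hQa
  have hPs_ge : b ≤ ∫ x in sᶜ, h x ^ (-p) ∂𝔮 := by
    have h1 : ∫ _x in sᶜ, (1:ℝ) ∂𝔮 = b := by simp [hb_def, Measure.real]
    rw [← h1]
    exact setIntegral_mono_on (integrableOn_const (measure_lt_top _ _).ne)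
      hhp.integrableOn hs.compl hp_on
  have hPsP : ∫ x in sᶜ, h x ^ (-p) ∂𝔮 ≤ P :=
    setIntegral_le_integral hhp (Filter.Eventually.of_forall fun x => Real.rpow_nonneg (hpos x).le _)
  have hPb : b ≤ P := le_trans hPs_ge hPsP
  have hP0' : 0 < P := lt_of_lt_of_le hb0 hPb
  set A : ℝ := a ^ (1 - 1 / q) * Q ^ (1 / q) with hA_def
  set B : ℝ := b ^ (1 - 1 / p) * P ^ (1 / p) with hB_def
  have hA0 : 0 < A := mul_pos (Real.rpow_pos_of_pos ha0 _) (Real.rpow_pos_of_pos hQ0 _)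
  have hB0 : 0 < B := mul_pos (Real.rpow_pos_of_pos hb0 _) (Real.rpow_pos_of_pos hP0' _)
  have haA : a ≤ A := by
    have h1 : a ^ (1/q) ≤ Q ^ (1/q) := Real.rpow_le_rpow ha0.le hQa (by positivity)
    calc a = a ^ (1 - 1/q) * a ^ (1/q) := by
          rw [← Real.rpow_add ha0]; norm_num
      _ ≤ A := mul_le_mul_of_nonneg_left h1 (Real.rpow_nonneg ha0.le _)
  have hbB : b ≤ B := by
    have h1 : b ^ (1/p) ≤ P ^ (1/p) := Real.rpow_le_rpow hb0.le hPb (by positivity)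
    calc b = b ^ (1 - 1/p) * b ^ (1/p) := by
          rw [← Real.rpow_add hb0]; norm_num
      _ ≤ B := mul_le_mul_of_nonneg_left h1 (Real.rpow_nonneg hb0.le _)
  have hAB1 : 1 ≤ A + B := by linarith
  have hABpos : 0 < A + B := by linarith
  -- split Z
  have hZsplit : Z = (∫ x in s, E x ∂𝔮) + ∫ x in sᶜ, E x ∂𝔮 := (integral_add_compl hs hEint).symm
  have hgmq : Measurable fun x => h x ^ q :=
    (Real.continuous_rpow_const hq.le).measurable.comp hmeas
  have hgmp : Measurable fun x => h x ^ (-p) := by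
    have he : (fun x => h x ^ (-p)) = fun x => Real.exp (Real.log (h x) * (-p)) :=
      funext fun x => Real.rpow_def_of_pos (hpos x) _
    rw [he]
    exact ((Real.measurable_log.comp hmeas).mul_const _).exp
  have hZs : ∫ x in s, E x ∂𝔮 ≤ a ^ (1 - m) * A ^ m := by
    have θ0 : 0 < m / q := div_pos hm0 hq
    have θ1 : m / q ≤ 1 := (div_le_one hq).mpr hmq
    have hcong : ∫ x in s, E x ∂𝔮 = ∫ x in s, (h x ^ q) ^ (m/q) ∂𝔮 := by
      apply setIntegral_congr_fun hs
      intro x hx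
      have hx' : 1 ≤ h x := hx
      show E x = (h x ^ q) ^ (m/q)
      rw [hE_eq x, if_pos hx', ← Real.rpow_mul (hpos x).le]
      congr 1
      field_simp
    calc ∫ x in s, E x ∂𝔮 = ∫ x in s, (h x ^ q) ^ (m/q) ∂𝔮 := hcong
      _ ≤ a ^ (1 - m/q) * (∫ x in s, h x ^ q ∂𝔮) ^ (m/q) :=
          aux_holder 𝔮 hs hgmq hq_on hhq.integrableOn θ0 θ1 ha0
      _ ≤ a ^ (1 - m/q) * Q ^ (m/q) := by
          apply mul_le_mul_of_nonneg_left _ (Real.rpow_nonneg ha0.le _)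
          exact Real.rpow_le_rpow (le_trans ha0.le hQs_ge) hQsQ θ0.le
      _ = a ^ (1 - m) * A ^ m := by
          have e1 : A ^ m = a ^ ((1 - 1/q)*m) * Q ^ ((1/q)*m) := by
            rw [hA_def, Real.mul_rpow (Real.rpow_nonneg ha0.le _) (Real.rpow_nonneg hQ0.le _),
              ← Real.rpow_mul ha0.le, ← Real.rpow_mul hQ0.le]
          rw [e1, ← mul_assoc, ← Real.rpow_add ha0]
          have e2 : 1 - m + (1 - 1/q) * m = 1 - m/q := by field_simp; ring
          have e3 : (1/q) * m = m/q := by ring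
          rw [e2, e3]
  have hZsc : ∫ x in sᶜ, E x ∂𝔮 ≤ b ^ (1 - m) * B ^ m := by
    have θ0 : 0 < m / p := div_pos hm0 hp
    have θ1 : m / p ≤ 1 := (div_le_one hp).mpr hmp
    have hcong : ∫ x in sᶜ, E x ∂𝔮 = ∫ x in sᶜ, (h x ^ (-p)) ^ (m/p) ∂𝔮 := by
      apply setIntegral_congr_fun hs.compl
      intro x hx
      have hx' : ¬ (1 ≤ h x) := hx
      show E x = (h x ^ (-p)) ^ (m/p)
      rw [hE_eq x, if_neg hx', ← Real.rpow_mul (hpos x).le]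
      congr 1
      field_simp
    calc ∫ x in sᶜ, E x ∂𝔮 = ∫ x in sᶜ, (h x ^ (-p)) ^ (m/p) ∂𝔮 := hcong
      _ ≤ b ^ (1 - m/p) * (∫ x in sᶜ, h x ^ (-p) ∂𝔮) ^ (m/p) :=
          aux_holder 𝔮 hs.compl hgmp hp_on hhp.integrableOn θ0 θ1 hb0
      _ ≤ b ^ (1 - m/p) * P ^ (m/p) := by
          apply mul_le_mul_of_nonneg_left _ (Real.rpow_nonneg hb0.le _)
          exact Real.rpow_le_rpow (le_trans hb0.le hPs_ge) hPsP θ0.le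
      _ = b ^ (1 - m) * B ^ m := by
          have e1 : B ^ m = b ^ ((1 - 1/p)*m) * P ^ ((1/p)*m) := by
            rw [hB_def, Real.mul_rpow (Real.rpow_nonneg hb0.le _) (Real.rpow_nonneg hP0'.le _),
              ← Real.rpow_mul hb0.le, ← Real.rpow_mul hP0'.le]
          rw [e1, ← mul_assoc, ← Real.rpow_add hb0]
          have e2 : 1 - m + (1 - 1/p) * m = 1 - m/p := by field_simp; ring
          have e3 : (1/p) * m = m/p := by ring
          rw [e2, e3]
  have hZab : Z ≤ a ^ (1-m) * A ^ m + b ^ (1-m) * B ^ m := by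
    rw [hZsplit]; exact add_le_add hZs hZsc
  -- two-point AM-GM (Hölder)
  have hgm2 : a ^ (1-m) * A ^ m + b ^ (1-m) * B ^ m ≤ (A+B) ^ m := by
    have hcm : (0:ℝ) < (A+B) ^ m := Real.rpow_pos_of_pos hABpos _
    have k1 : a ^ (1-m) * (A/(A+B)) ^ m ≤ (1-m)*a + m*(A/(A+B)) :=
      Real.geom_mean_le_arith_mean2_weighted (by linarith) hm0.le ha0.le (div_nonneg hA0.le hABpos.le) (by ring)
    have k2 : b ^ (1-m) * (B/(A+B)) ^ m ≤ (1-m)*b + m*(B/(A+B)) :=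
      Real.geom_mean_le_arith_mean2_weighted (by linarith) hm0.le hb0.le (div_nonneg hB0.le hABpos.le) (by ring)
    have eA : (A/(A+B)) ^ m * (A+B) ^ m = A ^ m := by
      rw [← Real.mul_rpow (div_nonneg hA0.le hABpos.le) hABpos.le, div_mul_cancel₀ _ hABpos.ne']
    have eB : (B/(A+B)) ^ m * (A+B) ^ m = B ^ m := by
      rw [← Real.mul_rpow (div_nonneg hB0.le hABpos.le) hABpos.le, div_mul_cancel₀ _ hABpos.ne']
    have e1 : a ^ (1-m) * A ^ m = (A+B)^m * (a^(1-m) * (A/(A+B))^m) := by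
      rw [← eA]; ring
    have e2 : b ^ (1-m) * B ^ m = (A+B)^m * (b^(1-m) * (B/(A+B))^m) := by
      rw [← eB]; ring
    have hsum : A/(A+B) + B/(A+B) = 1 := by
      rw [← add_div, div_self hABpos.ne']
    calc a ^ (1-m) * A ^ m + b ^ (1-m) * B ^ m
        = (A+B)^m * (a^(1-m) * (A/(A+B))^m) + (A+B)^m * (b^(1-m) * (B/(A+B))^m) := by
          rw [← e1, ← e2]
      _ ≤ (A+B)^m * ((1-m)*a + m*(A/(A+B))) + (A+B)^m * ((1-m)*b + m*(B/(A+B))) :=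
          add_le_add (mul_le_mul_of_nonneg_left k1 hcm.le) (mul_le_mul_of_nonneg_left k2 hcm.le)
      _ = (A+B)^m * ((1-m)*(a+b) + m*(A/(A+B) + B/(A+B))) := by ring
      _ = (A+B)^m := by rw [hab, hsum]; ring
  have hZAB : Z ≤ (A+B) ^ m := le_trans hZab hgm2
  have hlogZ : Real.log Z ≤ m * Real.log (A+B) := by
    calc Real.log Z ≤ Real.log ((A+B)^m) := Real.log_le_log hZ0 hZAB
      _ = m * Real.log (A+B) := Real.log_rpow hABpos m
  have hlog2 : 0 ≤ Real.log 2 := Real.log_nonneg one_le_two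
  set L : ℝ := Real.logb 2 (A+B) with hL_def
  have hlogAB : Real.log (A+B) = Real.log 2 * L := by
    rw [hL_def, Real.logb]
    field_simp
  have hL0 : 0 ≤ L := Real.logb_nonneg one_lt_two hAB1
  set M : ℝ := max (1/m) L with hM_def
  have hM1 : 1/m ≤ M := le_max_left _ _
  have hML : L ≤ M := le_max_right _ _
  have hM0 : 0 < M := lt_of_lt_of_le (by positivity) hM1
  have hH0 : 0 ≤ H := by
    have h1 : ∫ x, (ρ x - 1) ∂𝔮 ≤ ∫ x, ρ x * Real.log (ρ x) ∂𝔮 :=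
      integral_mono (hρint.sub (integrable_const 1)) hρlog
        (fun x => nonneg_sub_one_le_mul_log (hρnn x))
    rw [integral_sub hρint (integrable_const 1), hρ1, hρlogint] at h1
    simp at h1
    linarith
  have hexp2 : H + Real.log 2 ≤ 2 * Real.exp (H - 1) := by
    have h1 := Real.add_one_le_exp (H - 1 + Real.log 2)
    have h2 : Real.exp (H - 1 + Real.log 2) = Real.exp (H-1) * 2 := by
      rw [Real.exp_add, Real.exp_log two_pos]
    linarith
  have hmM : 1 ≤ m * M := by
    have h1 := mul_le_mul_of_nonneg_left hM1 hm0.le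
    rw [mul_one_div, div_self hm0.ne'] at h1
    linarith
  have c1 : m * I ≤ H + m * (Real.log 2 * L) := by
    have : m * (Real.log 2 * L) = m * Real.log (A+B) := by rw [hlogAB]
    linarith [hkey, hlogZ, this.ge, this.le]
  have c2 : H ≤ m * M * H := le_mul_of_one_le_left hH0 hmM
  have c3 : m * (Real.log 2 * L) ≤ m * (Real.log 2 * M) :=
    mul_le_mul_of_nonneg_left (mul_le_mul_of_nonneg_left hML hlog2) hm0.le
  have c4 : m * I ≤ m * M * H + m * (Real.log 2 * M) := by linarith
  have c5 : I ≤ M * (H + Real.log 2) := by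
    have e : m * M * H + m * (Real.log 2 * M) = m * (M * (H + Real.log 2)) := by ring
    rw [e] at c4
    exact le_of_mul_le_mul_left c4 hm0
  calc I ≤ M * (H + Real.log 2) := c5
    _ ≤ M * (2 * Real.exp (H-1)) := mul_le_mul_of_nonneg_left hexp2 hM0.le
    _ = 2 * Real.exp (H-1) * M := by ring
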